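/- For any single-peaked linear ordering ⪯ on a finite chain Lₙ, the operation F(x,y) = max_⪯(x,y) is nondecreasing with respect to the natural order ≤. -/

import Mathlib

theorem stmt_13 {n : ℕ} (r : Fin n → Fin n → Prop)
    (hlin : IsLinearOrder (Fin n) r)
    (hsp : ∀ a b c : Fin n, a < b → b < c → (r b a ∧ b ≠ a) ∨ (r b c ∧ b ≠ c))
    (F : Fin n → Fin n → Fin n)
    (hF : ∀ x y, (r x y → F x y = y) ∧ (¬ r x y → F x y = x)) :
    ∀ x x' y y', x ≤ x' → y ≤ y' → F x y ≤ F x' y' := by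
  have htot : ∀ a b, r a b ∨ r b a := hlin.total
  have htrans : ∀ {a b c}, r a b → r b c → r a c :=
    fun h h' => hlin.toIsPartialOrder.toIsPreorder.toIsTrans.trans _ _ _ h h'
  have hanti : ∀ {a b}, r a b → r b a → a = b :=
    fun h h' => hlin.toIsPartialOrder.toAntisymm.antisymm _ _ h h'
  have key : ∀ x x' y, x ≤ x' → F x y ≤ F x' y := by
    intro x x' y hxx'
    by_cases h1 : r x y <;> by_cases h2 : r x' y
    · rw [(hF x y).1 h1, (hF x' y).1 h2]
    · rw [(hF x y).1 h1, (hF x' y).2 h2]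
      by_contra hc
      push_neg at hc
      have hxne : x ≠ x' := by rintro rfl; exact h2 h1
      have hxx : x < x' := lt_of_le_of_ne hxx' hxne
      rcases hsp x x' y hxx hc with ⟨hr, _⟩ | ⟨hr, _⟩
      · exact h2 (htrans hr h1)
      · exact h2 hr
    · rw [(hF x y).2 h1, (hF x' y).1 h2]
      by_contra hc
      push_neg at hc
      have hxne : x ≠ x' := by rintro rfl; exact h1 h2
      have hxx : x < x' := lt_of_le_of_ne hxx' hxne
      rcases hsp y x x' hc hxx with ⟨hr, _⟩ | ⟨hr, _⟩
      · exact h1 hr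
      · exact h1 (htrans hr h2)
    · rw [(hF x y).2 h1, (hF x' y).2 h2]
      exact hxx'
  have hsymm : ∀ x y, F x y = F y x := by
    intro x y
    by_cases h : r x y
    · by_cases h' : r y x
      · rw [(hF x y).1 h, (hF y x).1 h']
        exact (hanti h h').symm
      · rw [(hF x y).1 h, (hF y x).2 h']
    · have h' : r y x := (htot x y).resolve_left h
      by_cases h'' : r y x
      · rw [(hF x y).2 h, (hF y x).1 h'']
      · exact absurd h' h''
  intro x x' y y' hx hy
  calc F x y ≤ F x' y := key x x' y hx
    _ = F y x' := hsymm x' y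
    _ ≤ F y' x' := key y y' x' hy
    _ = F x' y' := hsymm y' x'
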